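/- Consider a single component with campaigns C_c, targeting groups C_t, continuous non-decreasing supply curves D_j, and common bid p*. Suppose an allocation γ* satisfies: (i) Σ_{j∈A_i∩C_t} γ*_{i,j}·D_j(p*) = I_i for every i ∈ C_c, and (ii) Σ_{i∈C_c} I_i = Σ_{j∈C_t} D_j(p*) (full utilization), and (iii) Σ_{j∈C_t} D_j(b) < Σ_{i∈C_c} I_i for all 0 ≤ b < p*. Then the pure strategy bidding p* with allocation γ* is optimal, with cost Σ_{i∈C_c} I_i·p* − ∫₀^{p*} Σ_{j∈C_t} D_j(u) du, and no feasible strategy achieves lower cost. -/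

import Mathlib

open MeasureTheory Topology

lemma aux_swap {Nc Nr : ℕ} (A : Fin Nc → Finset (Fin Nr)) (B : Fin Nr → Finset (Fin Nc))
    (hAB : ∀ i j, i ∈ B j ↔ j ∈ A i) (f : Fin Nc → Fin Nr → ℝ) :
    ∑ i, ∑ j ∈ A i, f i j = ∑ j, ∑ i ∈ B j, f i j := by
  apply Finset.sum_comm'
  intro i j
  simp [hAB]

lemma aux_key (f : ℝ → ℝ) (hm : Monotone f) (hc : Continuous f) (p v : ℝ) :
    f v * p - ∫ u in (0:ℝ)..p, f u ≤ f v * v - ∫ u in (0:ℝ)..v, f u := by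
  have hi : ∀ a b : ℝ, IntervalIntegrable f volume a b := fun a b =>
    hc.intervalIntegrable a b
  have hadd : (∫ u in (0:ℝ)..p, f u) + (∫ u in p..v, f u) = ∫ u in (0:ℝ)..v, f u :=
    intervalIntegral.integral_add_adjacent_intervals (hi 0 p) (hi p v)
  have H : (∫ u in p..v, f u) ≤ f v * (v - p) := by
    rcases le_total p v with h | h
    · calc (∫ u in p..v, f u) ≤ ∫ u in p..v, f v := by
            apply intervalIntegral.integral_mono_on h (hi p v) intervalIntegrable_const
            intro x hx; exact hm hx.2
      _ = f v * (v - p) := by rw [intervalIntegral.integral_const, smul_eq_mul]; ring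
    · have h2 : f v * (p - v) ≤ ∫ u in v..p, f u := by
        calc f v * (p - v) = ∫ u in v..p, f v := by
              rw [intervalIntegral.integral_const, smul_eq_mul]; ring
        _ ≤ ∫ u in v..p, f u := by
            apply intervalIntegral.integral_mono_on h intervalIntegrable_const (hi v p)
            intro x hx; exact hm hx.1
      rw [intervalIntegral.integral_symm]
      linarith
  linarith

theorem stmt16 (Nc Nr : ℕ)
    (I : Fin Nc → ℝ) (hI : ∀ i, 0 < I i)
    (D : Fin Nr → ℝ → ℝ)
    (hmono : ∀ j, Monotone (D j)) (hcont : ∀ j, Continuous (D j))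
    (hnn : ∀ j b, 0 ≤ D j b)
    (A : Fin Nc → Finset (Fin Nr)) (B : Fin Nr → Finset (Fin Nc))
    (hAB : ∀ i j, i ∈ B j ↔ j ∈ A i)
    (pstar : ℝ) (hpstar : 0 ≤ pstar)
    (γ : Fin Nc → Fin Nr → ℝ) (hγnn : ∀ i j, 0 ≤ γ i j)
    (hγcap : ∀ j, (∑ i ∈ B j, γ i j) ≤ 1)
    (hexact : ∀ i, (∑ j ∈ A i, γ i j * D j pstar) = I i)
    (hfull : (∑ i, I i) = ∑ j, D j pstar)
    (hcrit : ∀ b, 0 ≤ b → b < pstar → (∑ j, D j b) < ∑ i, I i) :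
    (∑ i, ∑ j ∈ A i, γ i j * (D j pstar * pstar - ∫ u in (0:ℝ)..pstar, D j u)) =
        (∑ i, I i) * pstar - (∫ u in (0:ℝ)..pstar, (∑ j, D j u)) ∧
    (∀ (P : Fin Nc → Fin Nr → Finset ℝ) (w : Fin Nc → Fin Nr → ℝ → ℝ),
      (∀ i j, ∀ v ∈ P i j, 0 ≤ v) →
      (∀ i j, ∀ v ∈ P i j, 0 ≤ w i j v) →
      (∀ j, (∑ i ∈ B j, ∑ v ∈ P i j, w i j v) ≤ 1) →
      (∀ i, I i ≤ ∑ j ∈ A i, ∑ v ∈ P i j, w i j v * D j v) →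
      (∑ i, I i) * pstar - (∫ u in (0:ℝ)..pstar, (∑ j, D j u)) ≤
        ∑ i, ∑ j ∈ A i, ∑ v ∈ P i j,
          w i j v * (D j v * v - ∫ u in (0:ℝ)..v, D j u)) := by
  have hint : (∫ u in (0:ℝ)..pstar, (∑ j, D j u)) = ∑ j, ∫ u in (0:ℝ)..pstar, D j u := by
    apply intervalIntegral.integral_finset_sum
    intro j _
    exact (hcont j).intervalIntegrable 0 pstar
  have hintnn : ∀ j, 0 ≤ ∫ u in (0:ℝ)..pstar, D j u := fun j =>
    intervalIntegral.integral_nonneg hpstar (fun u _ => hnn j u)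
  constructor
  · -- cost identity
    have hswapγ : (∑ i, ∑ j ∈ A i, γ i j * ∫ u in (0:ℝ)..pstar, D j u)
        = ∑ j, (∑ i ∈ B j, γ i j) * ∫ u in (0:ℝ)..pstar, D j u := by
      rw [aux_swap A B hAB (fun i j => γ i j * ∫ u in (0:ℝ)..pstar, D j u)]
      exact Finset.sum_congr rfl fun j _ => (Finset.sum_mul _ _ _).symm
    have h1 : (∑ i, ∑ j ∈ A i, γ i j * (D j pstar * pstar - ∫ u in (0:ℝ)..pstar, D j u))
        = (∑ i, ∑ j ∈ A i, γ i j * D j pstar) * pstar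
          - ∑ i, ∑ j ∈ A i, γ i j * ∫ u in (0:ℝ)..pstar, D j u := by
      rw [Finset.sum_mul, ← Finset.sum_sub_distrib]
      apply Finset.sum_congr rfl; intro i _
      rw [Finset.sum_mul, ← Finset.sum_sub_distrib]
      apply Finset.sum_congr rfl; intro j _
      ring
    rw [h1, hswapγ]
    have h2 : (∑ i, ∑ j ∈ A i, γ i j * D j pstar) = ∑ i, I i :=
      Finset.sum_congr rfl (fun i _ => hexact i)
    rw [h2, hint]
    congr 1
    have hsum : (∑ j, (∑ i ∈ B j, γ i j) * D j pstar) = ∑ j, D j pstar := by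
      have := aux_swap A B hAB (fun i j => γ i j * D j pstar)
      rw [← hfull]
      rw [show (∑ j, (∑ i ∈ B j, γ i j) * D j pstar)
            = ∑ j, ∑ i ∈ B j, γ i j * D j pstar from
          Finset.sum_congr rfl fun j _ => Finset.sum_mul _ _ _]
      rw [← this]
      exact Finset.sum_congr rfl (fun i _ => hexact i)
    have hle : ∀ j : Fin Nr, j ∈ Finset.univ →
        (∑ i ∈ B j, γ i j) * D j pstar ≤ D j pstar := by
      intro j _
      calc (∑ i ∈ B j, γ i j) * D j pstar ≤ 1 * D j pstar :=
            mul_le_mul_of_nonneg_right (hγcap j) (hnn j pstar)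
      _ = D j pstar := one_mul _
    have hterm : ∀ j : Fin Nr, (∑ i ∈ B j, γ i j) * D j pstar = D j pstar := fun j =>
      (Finset.sum_eq_sum_iff_of_le hle).mp hsum j (Finset.mem_univ j)
    apply Finset.sum_congr rfl
    intro j _
    rcases eq_or_lt_of_le (hnn j pstar) with h0 | h0
    · -- D j pstar = 0 : integral is 0
      have hz : Set.EqOn (D j) 0 (Set.uIcc (0:ℝ) pstar) := by
        intro u hu
        rw [Set.uIcc_of_le hpstar] at hu
        have h1 := hmono j hu.2
        have h2 := hnn j u
        simp only [Pi.zero_apply]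
        linarith [h0 ▸ h1]
      have : (∫ u in (0:ℝ)..pstar, D j u) = ∫ u in (0:ℝ)..pstar, (0:ℝ) :=
        intervalIntegral.integral_congr hz
      rw [this]; simp
    · -- s_j = 1
      have hs : (∑ i ∈ B j, γ i j) = 1 := by
        have h : ((∑ i ∈ B j, γ i j) - 1) * D j pstar = 0 := by
          rw [sub_mul, hterm j]; ring
        rcases mul_eq_zero.mp h with h | h
        · linarith
        · exact absurd h (ne_of_gt h0)
      rw [hs, one_mul]
  · -- lower bound
    intro P w hPnn hwnn hcap hdem
    have main : (∑ i, ∑ j ∈ A i, ∑ v ∈ P i j,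
        w i j v * (D j v * pstar - ∫ u in (0:ℝ)..pstar, D j u)) ≤
        ∑ i, ∑ j ∈ A i, ∑ v ∈ P i j, w i j v * (D j v * v - ∫ u in (0:ℝ)..v, D j u) := by
      apply Finset.sum_le_sum; intro i _
      apply Finset.sum_le_sum; intro j hj
      apply Finset.sum_le_sum; intro v hv
      exact mul_le_mul_of_nonneg_left (aux_key (D j) (hmono j) (hcont j) pstar v)
        (hwnn i j v hv)
    refine le_trans ?_ main
    have expand : (∑ i, ∑ j ∈ A i, ∑ v ∈ P i j,
        w i j v * (D j v * pstar - ∫ u in (0:ℝ)..pstar, D j u))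
        = (∑ i, ∑ j ∈ A i, ∑ v ∈ P i j, w i j v * D j v) * pstar
          - ∑ i, ∑ j ∈ A i, (∑ v ∈ P i j, w i j v) * ∫ u in (0:ℝ)..pstar, D j u := by
      rw [Finset.sum_mul, ← Finset.sum_sub_distrib]
      apply Finset.sum_congr rfl; intro i _
      rw [Finset.sum_mul, ← Finset.sum_sub_distrib]
      apply Finset.sum_congr rfl; intro j _
      rw [Finset.sum_mul, Finset.sum_mul, ← Finset.sum_sub_distrib]
      apply Finset.sum_congr rfl; intro v _
      ring
    have hswapw : (∑ i, ∑ j ∈ A i, (∑ v ∈ P i j, w i j v) * ∫ u in (0:ℝ)..pstar, D j u)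
        = ∑ j, ∑ i ∈ B j, (∑ v ∈ P i j, w i j v) * ∫ u in (0:ℝ)..pstar, D j u :=
      aux_swap A B hAB _
    rw [expand, hswapw, hint]
    have t1 : (∑ i, I i) * pstar ≤ (∑ i, ∑ j ∈ A i, ∑ v ∈ P i j, w i j v * D j v) * pstar :=
      mul_le_mul_of_nonneg_right (Finset.sum_le_sum (fun i _ => hdem i)) hpstar
    have t2 : (∑ j, ∑ i ∈ B j, (∑ v ∈ P i j, w i j v) * ∫ u in (0:ℝ)..pstar, D j u)
        ≤ ∑ j, ∫ u in (0:ℝ)..pstar, D j u := by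
      apply Finset.sum_le_sum; intro j _
      calc (∑ i ∈ B j, (∑ v ∈ P i j, w i j v) * ∫ u in (0:ℝ)..pstar, D j u)
          = (∑ i ∈ B j, ∑ v ∈ P i j, w i j v) * ∫ u in (0:ℝ)..pstar, D j u :=
            (Finset.sum_mul _ _ _).symm
      _ ≤ 1 * ∫ u in (0:ℝ)..pstar, D j u :=
            mul_le_mul_of_nonneg_right (hcap j) (hintnn j)
      _ = _ := one_mul _
    linarith
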